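/- Let k be a field of characteristic zero, let Δ be a two-dimensional lattice polygon, and let P, Q, R be three distinct lattice points of Δ. If each of the two-term sequences (x^{(P,1)}, x^{(Q,1)}), (x^{(Q,1)}, x^{(R,1)}) and (x^{(P,1)}, x^{(R,1)}) is weakly regular on R_Δ, then the three-term sequence x^{(P,1)}, x^{(Q,1)}, x^{(R,1)} is weakly regular on R_Δ. -/

import Mathlib

open scoped Pointwise

noncomputable section

namespace Stmt7Aux

lemma reg_iff {R : Type*} [CommRing R] (N : Submodule R R) (c : R) :
    IsSMulRegular (R ⧸ N) c ↔ ∀ f : R, c * f ∈ N → f ∈ N := by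
  constructor
  · intro h f hf
    have h1 : c • (Submodule.Quotient.mk f : R ⧸ N) = c • (0 : R ⧸ N) := by
      rw [smul_zero, ← Submodule.Quotient.mk_smul, smul_eq_mul]
      exact (Submodule.Quotient.mk_eq_zero N).2 hf
    exact (Submodule.Quotient.mk_eq_zero N).1 (h h1)
  · intro h x y hxy
    obtain ⟨f, rfl⟩ := Submodule.Quotient.mk_surjective N x
    obtain ⟨g, rfl⟩ := Submodule.Quotient.mk_surjective N y
    simp only [] at hxy
    rw [← Submodule.Quotient.mk_smul, ← Submodule.Quotient.mk_smul,
      Submodule.Quotient.eq] at hxy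
    rw [Submodule.Quotient.eq]
    exact h (f - g) (by rw [mul_sub]; simpa [smul_eq_mul] using hxy)

variable {k : Type*} [Field k] {G : Type*} [AddCommMonoid G]

lemma mem_of_support (I : Ideal (AddMonoidAlgebra k G)) (f : AddMonoidAlgebra k G)
    (h : ∀ x ∈ f.coeff.support, AddMonoidAlgebra.single x (1 : k) ∈ I) : f ∈ I := by
  classical
  induction f using AddMonoidAlgebra.induction with
  | zero => exact I.zero_mem
  | single_add a b f ha hb ih =>
    have hsupp : (AddMonoidAlgebra.single a b + f).coeff.support = insert a f.coeff.support := by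
      rw [AddMonoidAlgebra.coeff_add, AddMonoidAlgebra.coeff_single, Finsupp.support_add_eq, Finsupp.support_single_ne_zero _ hb, ← Finset.insert_eq]
      rw [Finsupp.support_single_ne_zero _ hb]
      simpa using ha
    refine I.add_mem ?_ (ih fun x hx => h x (by rw [hsupp]; exact Finset.mem_insert_of_mem hx))
    have h1 : AddMonoidAlgebra.single a (1 : k) ∈ I := h a (by rw [hsupp]; exact Finset.mem_insert_self _ _)
    have : (AddMonoidAlgebra.single a b : AddMonoidAlgebra k G)
        = AddMonoidAlgebra.single (0 : G) b * AddMonoidAlgebra.single a (1 : k) := by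
      rw [AddMonoidAlgebra.single_mul_single, zero_add, mul_one]
    rw [this]
    exact I.mul_mem_left _ h1

lemma single_mem_span_single (t n : G) :
    AddMonoidAlgebra.single (t + n) (1 : k)
      ∈ Ideal.span {AddMonoidAlgebra.single t (1 : k)} := by
  refine Ideal.mem_span_singleton'.2 ⟨AddMonoidAlgebra.single n 1, ?_⟩
  rw [AddMonoidAlgebra.single_mul_single, mul_one, add_comm]

lemma support_of_mem_span_single (t : G) (f : AddMonoidAlgebra k G)
    (hf : f ∈ Ideal.span {AddMonoidAlgebra.single t (1 : k)}) :
    ∀ x ∈ f.coeff.support, ∃ n, x = t + n := by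
  classical
  obtain ⟨g, rfl⟩ := Ideal.mem_span_singleton'.1 hf
  intro x hx
  have h1 := AddMonoidAlgebra.support_coeff_mul_subset g (AddMonoidAlgebra.single t (1 : k)) hx
  have h2 : (AddMonoidAlgebra.single t (1 : k)).coeff.support ⊆ {t} := Finsupp.support_single_subset
  rw [Finset.mem_add] at h1
  obtain ⟨a, ha, b, hb, rfl⟩ := h1
  have : b = t := by simpa using h2 hb
  exact ⟨a, by rw [this, add_comm]⟩

lemma support_of_mem_span_pair (t₁ t₂ : G) (f : AddMonoidAlgebra k G)
    (hf : f ∈ Ideal.span {AddMonoidAlgebra.single t₁ (1 : k),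
      AddMonoidAlgebra.single t₂ (1 : k)}) :
    ∀ x ∈ f.coeff.support, (∃ n, x = t₁ + n) ∨ ∃ n, x = t₂ + n := by
  classical
  obtain ⟨g, h, rfl⟩ := Ideal.mem_span_pair.1 hf
  intro x hx
  rcases Finset.mem_union.1 (Finsupp.support_add hx) with hx' | hx'
  · left
    have h1 := AddMonoidAlgebra.support_coeff_mul_subset g (AddMonoidAlgebra.single t₁ (1 : k)) hx'
    rw [Finset.mem_add] at h1
    obtain ⟨a, ha, b, hb, rfl⟩ := h1
    have : b = t₁ := by simpa using Finsupp.support_single_subset hb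
    exact ⟨a, by rw [this, add_comm]⟩
  · right
    have h1 := AddMonoidAlgebra.support_coeff_mul_subset h (AddMonoidAlgebra.single t₂ (1 : k)) hx'
    rw [Finset.mem_add] at h1
    obtain ⟨a, ha, b, hb, rfl⟩ := h1
    have : b = t₂ := by simpa using Finsupp.support_single_subset hb
    exact ⟨a, by rw [this, add_comm]⟩

/-- Extract the combinatorial colon condition from regularity of `single s 1` on
`R / (single t 1)`. -/
lemma colon_of_reg (s t : G)
    (hreg : ∀ f : AddMonoidAlgebra k G,
      AddMonoidAlgebra.single s (1 : k) * f ∈ Ideal.span {AddMonoidAlgebra.single t (1 : k)} →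
      f ∈ Ideal.span {AddMonoidAlgebra.single t (1 : k)}) :
    ∀ x : G, (∃ n, s + x = t + n) → ∃ n, x = t + n := by
  intro x ⟨n, hn⟩
  have h1 : AddMonoidAlgebra.single s (1 : k) * AddMonoidAlgebra.single x 1
      ∈ Ideal.span {AddMonoidAlgebra.single t (1 : k)} := by
    rw [AddMonoidAlgebra.single_mul_single, mul_one, hn]
    exact single_mem_span_single t n
  have h2 := hreg _ h1
  have h3 := support_of_mem_span_single t _ h2 x
    (by rw [AddMonoidAlgebra.coeff_single, Finsupp.support_single_ne_zero _ (one_ne_zero)]; exact Finset.mem_singleton_self x)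
  exact h3

end Stmt7Aux

/-- The embedding of the lattice `ℤ²` into `ℝ²`. -/
def ι2 (p : ℤ × ℤ) : ℝ × ℝ := ((p.1 : ℝ), (p.2 : ℝ))

/-- A lattice polygon: the convex hull of a finite set of lattice points. -/
def IsLatticePolygon (Δ : Set (ℝ × ℝ)) : Prop :=
  ∃ S : Finset (ℤ × ℤ), Δ = convexHull ℝ (ι2 '' ↑S)

/-- `C` is the monoid `C_Δ = {(v, q) ∈ ℤ² × ℕ : v ∈ qΔ}`. -/
def IsPolygonMonoid (Δ : Set (ℝ × ℝ)) (C : AddSubmonoid ((ℤ × ℤ) × ℕ)) : Prop :=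
  ∀ (v : ℤ × ℤ) (q : ℕ), ((v, q) ∈ C ↔ ι2 v ∈ (q : ℝ) • Δ)

/-- `Δ` is a (possibly degenerate) quadrangle with opposite vertices `P` and `Q`:
for each of the two closed half-planes `H` bounded by the line through `P` and `Q`
(equivalently, for every nonzero linear form `f` with `f P = f Q`, taking
`H = {x | f x ≤ f P}`), there is a point `T` with `H ∩ Δ = conv{P, Q, T}`. -/
def IsQuadrangleOpp (Δ : Set (ℝ × ℝ)) (P Q : ℝ × ℝ) : Prop :=
  ∀ f : (ℝ × ℝ) →ₗ[ℝ] ℝ, f ≠ 0 → f P = f Q →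
    ∃ T : ℝ × ℝ, {x | f x ≤ f P} ∩ Δ = convexHull ℝ {P, Q, T}

/-- if each of the two-term sequences `(x^{(P,1)}, x^{(Q,1)})`,
`(x^{(Q,1)}, x^{(R,1)})` and `(x^{(P,1)}, x^{(R,1)})` is weakly regular on `R_Δ = k[C_Δ]`,
then so is the three-term sequence `x^{(P,1)}, x^{(Q,1)}, x^{(R,1)}`. -/
theorem stmt7 (k : Type*) [Field k] [CharZero k]
    (Δ : Set (ℝ × ℝ)) (hΔ : IsLatticePolygon Δ) (h2 : (interior Δ).Nonempty)
    (C : AddSubmonoid ((ℤ × ℤ) × ℕ)) (hC : IsPolygonMonoid Δ C)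
    (P Q R : ℤ × ℤ) (hP : ι2 P ∈ Δ) (hQ : ι2 Q ∈ Δ) (hR : ι2 R ∈ Δ)
    (hPQ : P ≠ Q) (hPR : P ≠ R) (hQR : Q ≠ R)
    (hPC : ((P, 1) : (ℤ × ℤ) × ℕ) ∈ C) (hQC : ((Q, 1) : (ℤ × ℤ) × ℕ) ∈ C)
    (hRC : ((R, 1) : (ℤ × ℤ) × ℕ) ∈ C)
    (hPQreg : RingTheory.Sequence.IsWeaklyRegular (AddMonoidAlgebra k ↥C)
      [AddMonoidAlgebra.single (⟨(P, 1), hPC⟩ : ↥C) (1 : k),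
       AddMonoidAlgebra.single (⟨(Q, 1), hQC⟩ : ↥C) (1 : k)])
    (hQRreg : RingTheory.Sequence.IsWeaklyRegular (AddMonoidAlgebra k ↥C)
      [AddMonoidAlgebra.single (⟨(Q, 1), hQC⟩ : ↥C) (1 : k),
       AddMonoidAlgebra.single (⟨(R, 1), hRC⟩ : ↥C) (1 : k)])
    (hPRreg : RingTheory.Sequence.IsWeaklyRegular (AddMonoidAlgebra k ↥C)
      [AddMonoidAlgebra.single (⟨(P, 1), hPC⟩ : ↥C) (1 : k),
       AddMonoidAlgebra.single (⟨(R, 1), hRC⟩ : ↥C) (1 : k)]) :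
    RingTheory.Sequence.IsWeaklyRegular (AddMonoidAlgebra k ↥C)
      [AddMonoidAlgebra.single (⟨(P, 1), hPC⟩ : ↥C) (1 : k),
       AddMonoidAlgebra.single (⟨(Q, 1), hQC⟩ : ↥C) (1 : k),
       AddMonoidAlgebra.single (⟨(R, 1), hRC⟩ : ↥C) (1 : k)] := by
  classical
  set pt : ↥C := ⟨(P, 1), hPC⟩ with hpt
  set qt : ↥C := ⟨(Q, 1), hQC⟩ with hqt
  set rt : ↥C := ⟨(R, 1), hRC⟩ with hrt
  set u : AddMonoidAlgebra k ↥C := AddMonoidAlgebra.single pt (1 : k) with hu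
  set v : AddMonoidAlgebra k ↥C := AddMonoidAlgebra.single qt (1 : k) with hv
  set w : AddMonoidAlgebra k ↥C := AddMonoidAlgebra.single rt (1 : k) with hw
  refine ⟨fun i hi => ?_⟩
  have hi3 : i < 3 := hi
  interval_cases i
  · exact hPQreg.regular_mod_prev 0 (by simp)
  · exact hPQreg.regular_mod_prev 1 (by simp)
  · -- the interesting case
    have hN : (Ideal.ofList (List.take 2 [u, v, w]) • ⊤ :
        Submodule (AddMonoidAlgebra k ↥C) (AddMonoidAlgebra k ↥C)) = Ideal.span {u, v} := by
      rw [show List.take 2 [u, v, w] = [u, v] from rfl, smul_eq_mul, Ideal.mul_top]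
      show Ideal.span {r | r ∈ [u, v]} = Ideal.span {u, v}
      congr 1
      ext r; simp
    have hNu : (Ideal.ofList (List.take 1 [u, w]) • ⊤ :
        Submodule (AddMonoidAlgebra k ↥C) (AddMonoidAlgebra k ↥C)) = Ideal.span {u} := by
      rw [show List.take 1 [u, w] = [u] from rfl, smul_eq_mul, Ideal.mul_top]
      show Ideal.span {r | r ∈ [u]} = Ideal.span {u}
      congr 1
      ext r; simp
    have hNv : (Ideal.ofList (List.take 1 [v, w]) • ⊤ :
        Submodule (AddMonoidAlgebra k ↥C) (AddMonoidAlgebra k ↥C)) = Ideal.span {v} := by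
      rw [show List.take 1 [v, w] = [v] from rfl, smul_eq_mul, Ideal.mul_top]
      show Ideal.span {r | r ∈ [v]} = Ideal.span {v}
      congr 1
      ext r; simp
    have hA' := hPRreg.regular_mod_prev 1 (by simp)
    rw [hNu] at hA'
    have hA : ∀ f : AddMonoidAlgebra k ↥C,
        AddMonoidAlgebra.single rt (1 : k) * f ∈ Ideal.span {u} → f ∈ Ideal.span {u} :=
      fun f hf => (Stmt7Aux.reg_iff _ _).1 hA' f hf
    have hB' := hQRreg.regular_mod_prev 1 (by simp)
    rw [hNv] at hB'
    have hB : ∀ f : AddMonoidAlgebra k ↥C,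
        AddMonoidAlgebra.single rt (1 : k) * f ∈ Ideal.span {v} → f ∈ Ideal.span {v} :=
      fun f hf => (Stmt7Aux.reg_iff _ _).1 hB' f hf
    have colA := Stmt7Aux.colon_of_reg (k := k) (G := ↥C) rt pt hA
    have colB := Stmt7Aux.colon_of_reg (k := k) (G := ↥C) rt qt hB
    show IsSMulRegular (AddMonoidAlgebra k ↥C ⧸
        (Ideal.ofList (List.take 2 [u, v, w]) • ⊤ :
          Submodule (AddMonoidAlgebra k ↥C) (AddMonoidAlgebra k ↥C))) w
    rw [hN]
    refine (Stmt7Aux.reg_iff _ _).2 fun f hf => ?_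
    refine Stmt7Aux.mem_of_support _ f fun x hx => ?_
    have hkey : (w * f).coeff (rt + x) = f.coeff x := by
      have := AddMonoidAlgebra.coeff_single_mul_eq_mul_coeff (x := f) (r := (1 : k)) (m := rt) (m₁ := rt + x) x
        (fun a _ => add_right_inj rt)
      rw [← hw] at this
      rw [this, one_mul]
    have hx' : rt + x ∈ (w * f).coeff.support := by
      rw [Finsupp.mem_support_iff, hkey]
      exact Finsupp.mem_support_iff.1 hx
    rcases Stmt7Aux.support_of_mem_span_pair pt qt _ hf (rt + x) hx' with h | h
    · obtain ⟨n, rfl⟩ := colA x h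
      exact Ideal.span_mono (by simp [hu, hv]) (Stmt7Aux.single_mem_span_single pt n)
    · obtain ⟨n, rfl⟩ := colB x h
      exact Ideal.span_mono (by simp [hu, hv]) (Stmt7Aux.single_mem_span_single qt n)
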